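/- For every a ∈ ℝ, the improper integral ∫_{|s|>1} (e^{is}/s)·𝟙_{s/b>a} ds (for b ≠ 0 fixed) is bounded in modulus by a universal constant independent of a and b. -/

import Mathlib

open Complex MeasureTheory Filter Set intervalIntegral

noncomputable def oscF (s : ℝ) : ℂ := Complex.exp (I * (s : ℂ)) / (s : ℂ)

lemma oscF_continuousOn : ContinuousOn oscF {s : ℝ | s ≠ 0} := by
  apply ContinuousOn.div
  · exact (Complex.continuous_exp.comp (continuous_const.mul Complex.continuous_ofReal)).continuousOn
  · exact Complex.continuous_ofReal.continuousOn
  · intro x hx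
    simpa [Complex.ofReal_ne_zero] using hx

lemma oscF_integrableOn {p q : ℝ} (h : q ≤ -1 ∨ 1 ≤ p) : IntegrableOn oscF (Set.Ioo p q) := by
  rcases le_or_gt p q with hpq | hpq
  · have hc : ContinuousOn oscF (Set.Icc p q) := by
      apply oscF_continuousOn.mono
      intro x hx
      simp only [mem_setOf_eq]
      rcases h with h | h
      · have := hx.2; intro h0; rw [h0] at this; linarith
      · have := hx.1; intro h0; rw [h0] at this; linarith
    exact (hc.integrableOn_Icc).mono_set Set.Ioo_subset_Icc_self
  · rw [Set.Ioo_eq_empty (not_lt.mpr hpq.le)]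
    exact integrableOn_empty

lemma oscF_intervalIntegrable {p q : ℝ} (h : (0:ℝ) ∉ Set.uIcc p q) :
    IntervalIntegrable oscF volume p q := by
  apply (oscF_continuousOn.mono _).intervalIntegrable
  intro x hx
  simp only [mem_setOf_eq]
  intro h0
  exact h (h0 ▸ hx)

lemma osc_bound {a b : ℝ} (hab : a ≤ b) (h0 : (0:ℝ) ∉ Set.uIcc a b) :
    ‖∫ s in a..b, oscF s‖ ≤ |a|⁻¹ + |b|⁻¹ + (a⁻¹ - b⁻¹) := by
  have hane : a ≠ 0 := fun h => h0 (h ▸ Set.left_mem_uIcc)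
  have hbne : b ≠ 0 := fun h => h0 (h ▸ Set.right_mem_uIcc)
  have hne : ∀ x ∈ Set.uIcc a b, x ≠ 0 := fun x hx h => h0 (h ▸ hx)
  have hu : ∀ x ∈ Set.uIcc a b,
      HasDerivAt (fun y : ℝ => ((y : ℂ))⁻¹) (-(((x:ℂ))^2)⁻¹) x := by
    intro x hx
    exact (hasDerivAt_inv (by exact_mod_cast hne x hx)).comp_ofReal
  have hv : ∀ x ∈ Set.uIcc a b,
      HasDerivAt (fun y : ℝ => -I * Complex.exp (I * y)) (Complex.exp (I * x)) x := by
    intro x hx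
    have hid : HasDerivAt (fun y : ℂ => I * y) I ((x:ℝ):ℂ) := by
      simpa using (hasDerivAt_id ((x:ℝ):ℂ)).const_mul I
    have hexp : HasDerivAt (fun y : ℂ => Complex.exp (I * y))
        (Complex.exp (I * x) * I) ((x:ℝ):ℂ) :=
      (Complex.hasDerivAt_exp (I * x)).comp _ hid
    have h1 := (hexp.const_mul (-I)).comp_ofReal
    convert h1 using 1
    have : I * I = -1 := Complex.I_mul_I
    ring_nf
    ring_nf at this
    rw [show I^2 = -1 from by rw [sq]; exact Complex.I_mul_I]
    ring
  have hu' : IntervalIntegrable (fun x : ℝ => -(((x:ℂ))^2)⁻¹) volume a b := by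
    apply ContinuousOn.intervalIntegrable
    apply ContinuousOn.neg
    apply ContinuousOn.inv₀
    · exact (Complex.continuous_ofReal.continuousOn.pow 2)
    · intro x hx
      exact pow_ne_zero 2 (by exact_mod_cast hne x hx)
  have hv' : IntervalIntegrable (fun x : ℝ => Complex.exp (I * x)) volume a b :=
    (Complex.continuous_exp.comp
      (continuous_const.mul Complex.continuous_ofReal)).intervalIntegrable _ _
  have key := intervalIntegral.integral_mul_deriv_eq_deriv_mul hu hv hu' hv'
  rw [show (∫ s in a..b, oscF s) = ∫ x in a..b, ((x:ℂ))⁻¹ * Complex.exp (I * x) from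
    intervalIntegral.integral_congr (fun x _ => by
      simp only [oscF, div_eq_mul_inv, mul_comm])]
  rw [key]
  have hnorm1 : ∀ x : ℝ, ‖((x:ℂ))⁻¹ * (-I * Complex.exp (I * x))‖ = |x|⁻¹ := by
    intro x
    simp [norm_mul, map_inv₀, Complex.norm_exp]
  have h3 : ‖∫ x in a..b, (-(((x:ℂ))^2)⁻¹) * (-I * Complex.exp (I * x))‖ ≤ a⁻¹ - b⁻¹ := by
    have hb1 := intervalIntegral.norm_integral_le_integral_norm
      (f := fun x : ℝ => (-(((x:ℂ))^2)⁻¹) * (-I * Complex.exp (I * x))) (μ := volume) hab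
    have heq : (∫ x in a..b, ‖(-(((x:ℂ))^2)⁻¹) * (-I * Complex.exp (I * x))‖)
        = ∫ x in a..b, x ^ (-2:ℤ) := by
      apply intervalIntegral.integral_congr
      intro x hx
      have hx0 : x ≠ 0 := hne x hx
      simp [norm_mul, map_inv₀, Complex.norm_exp,
        abs_pow, sq_abs, zpow_neg, zpow_ofNat]
    have hz : (∫ x in a..b, x ^ (-2:ℤ)) = a⁻¹ - b⁻¹ := by
      rw [integral_zpow (Or.inr ⟨by norm_num, h0⟩)]
      norm_num
      ring
    rw [heq, hz] at hb1
    exact hb1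
  calc ‖((b:ℂ))⁻¹ * (-I * Complex.exp (I * b)) - ((a:ℂ))⁻¹ * (-I * Complex.exp (I * a))
        - ∫ x in a..b, (-(((x:ℂ))^2)⁻¹) * (-I * Complex.exp (I * x))‖
      ≤ ‖((b:ℂ))⁻¹ * (-I * Complex.exp (I * b)) - ((a:ℂ))⁻¹ * (-I * Complex.exp (I * a))‖
        + ‖∫ x in a..b, (-(((x:ℂ))^2)⁻¹) * (-I * Complex.exp (I * x))‖ := norm_sub_le _ _
    _ ≤ ‖((b:ℂ))⁻¹ * (-I * Complex.exp (I * b))‖ + ‖((a:ℂ))⁻¹ * (-I * Complex.exp (I * a))‖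
        + ‖∫ x in a..b, (-(((x:ℂ))^2)⁻¹) * (-I * Complex.exp (I * x))‖ := by
        have := norm_sub_le (((b:ℂ))⁻¹ * (-I * Complex.exp (I * b)))
          (((a:ℂ))⁻¹ * (-I * Complex.exp (I * a)))
        linarith
    _ ≤ |a|⁻¹ + |b|⁻¹ + (a⁻¹ - b⁻¹) := by
        rw [hnorm1 a, hnorm1 b]
        linarith

lemma osc_bound_pos {a b : ℝ} (ha : 1 ≤ a) (hab : a ≤ b) :
    ‖∫ s in a..b, oscF s‖ ≤ 3 / a := by
  have h0 : (0:ℝ) ∉ Set.uIcc a b := by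
    rw [Set.uIcc_of_le hab]; intro h; exact absurd h.1 (by linarith)
  have key := osc_bound hab h0
  have h1 : |a| = a := abs_of_pos (by linarith)
  have h2 : |b| = b := abs_of_pos (by linarith)
  rw [h1, h2] at key
  have hb1 : b⁻¹ ≤ a⁻¹ := inv_anti₀ (by linarith) hab
  have ha0 : 0 ≤ a⁻¹ := inv_nonneg.mpr (by linarith)
  rw [div_eq_mul_inv]
  linarith

lemma osc_bound_neg {a b : ℝ} (hb : b ≤ -1) (hab : a ≤ b) :
    ‖∫ s in a..b, oscF s‖ ≤ 3 / (-b) := by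
  have h0 : (0:ℝ) ∉ Set.uIcc a b := by
    rw [Set.uIcc_of_le hab]; intro h; exact absurd h.2 (by linarith)
  have key := osc_bound hab h0
  have h1 : |a| = -a := abs_of_neg (by linarith)
  have h2 : |b| = -b := abs_of_neg (by linarith)
  rw [h1, h2] at key
  have e1 : (-a)⁻¹ = -a⁻¹ := by rw [inv_neg]
  have e2 : (-b)⁻¹ = -b⁻¹ := by rw [inv_neg]
  have h3 : 0 ≤ (-b)⁻¹ := inv_nonneg.mpr (by linarith)
  rw [e1, e2] at key
  rw [div_eq_mul_inv, e2]
  rw [e2] at h3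
  linarith

lemma osc_conv_pos {t : ℝ} (ht : 1 ≤ t) :
    ∃ L : ℂ, Tendsto (fun R : ℝ => ∫ s in t..R, oscF s) atTop (nhds L) ∧ ‖L‖ ≤ 3 := by
  have key : ∀ m n : ℝ, t ≤ m → t ≤ n →
      (∫ s in t..m, oscF s) - (∫ s in t..n, oscF s) = ∫ s in n..m, oscF s := by
    intro m n hm hn
    have h1 : IntervalIntegrable oscF volume t n := oscF_intervalIntegrable (by
      rw [Set.uIcc_of_le hn]; intro h; exact absurd h.1 (by linarith))
    have h2 : IntervalIntegrable oscF volume n m := oscF_intervalIntegrable (by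
      intro h
      rcases Set.mem_uIcc.mp h with ⟨h', _⟩ | ⟨h', _⟩ <;> linarith)
    rw [← integral_add_adjacent_intervals h1 h2]; ring
  have hcauchy : CauchySeq (fun R : ℝ => ∫ s in t..R, oscF s) := by
    rw [Metric.cauchySeq_iff]
    intro ε hε
    refine ⟨max t (3 / ε + 1), fun m hm n hn => ?_⟩
    have hmt : t ≤ m := le_trans (le_max_left _ _) hm
    have hnt : t ≤ n := le_trans (le_max_left _ _) hn
    rw [dist_eq_norm, key m n hmt hnt]
    have hbig : 3 / ε + 1 ≤ min m n :=
      le_min (le_trans (le_max_right _ _) hm) (le_trans (le_max_right _ _) hn)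
    have hεd : 0 < 3 / ε := by positivity
    have hminpos : 0 < min m n := by linarith
    have step : ‖∫ s in n..m, oscF s‖ ≤ 3 / min m n := by
      rcases le_total n m with h | h
      · refine le_trans (osc_bound_pos (by linarith) h) ?_
        exact div_le_div_of_nonneg_left (by norm_num) hminpos (min_le_right _ _)
      · rw [integral_symm, norm_neg]
        refine le_trans (osc_bound_pos (by linarith) h) ?_
        exact div_le_div_of_nonneg_left (by norm_num) hminpos (min_le_left _ _)
    refine lt_of_le_of_lt step ?_
    rw [div_lt_iff₀ hminpos]
    have h4 : 3 / ε < min m n := by linarith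
    rw [div_lt_iff₀ hε] at h4
    nlinarith
  obtain ⟨L, hL⟩ := cauchySeq_tendsto_of_complete hcauchy
  refine ⟨L, hL, ?_⟩
  refine le_of_tendsto hL.norm ?_
  filter_upwards [eventually_ge_atTop t] with R hR
  refine le_trans (osc_bound_pos ht hR) ?_
  rw [div_le_iff₀ (by linarith)]
  nlinarith

lemma osc_conv_neg {t : ℝ} (ht : t ≤ -1) :
    ∃ L : ℂ, Tendsto (fun R : ℝ => ∫ s in (-R)..t, oscF s) atTop (nhds L) ∧ ‖L‖ ≤ 3 := by
  have key : ∀ m n : ℝ, -t ≤ m → -t ≤ n →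
      (∫ s in (-m)..t, oscF s) - (∫ s in (-n)..t, oscF s) = ∫ s in (-m)..(-n), oscF s := by
    intro m n hm hn
    have h1 : IntervalIntegrable oscF volume (-m) (-n) := oscF_intervalIntegrable (by
      intro h
      rcases Set.mem_uIcc.mp h with ⟨_, h'⟩ | ⟨_, h'⟩ <;> linarith)
    have h2 : IntervalIntegrable oscF volume (-n) t := oscF_intervalIntegrable (by
      rw [Set.uIcc_of_le (by linarith)]; intro h; exact absurd h.2 (by linarith))
    rw [← integral_add_adjacent_intervals h1 h2]; ring
  have hcauchy : CauchySeq (fun R : ℝ => ∫ s in (-R)..t, oscF s) := by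
    rw [Metric.cauchySeq_iff]
    intro ε hε
    refine ⟨max (-t) (3 / ε + 1), fun m hm n hn => ?_⟩
    have hmt : -t ≤ m := le_trans (le_max_left _ _) hm
    have hnt : -t ≤ n := le_trans (le_max_left _ _) hn
    rw [dist_eq_norm, key m n hmt hnt]
    have hbig : 3 / ε + 1 ≤ min m n :=
      le_min (le_trans (le_max_right _ _) hm) (le_trans (le_max_right _ _) hn)
    have hεd : 0 < 3 / ε := by positivity
    have hminpos : 0 < min m n := by linarith
    have step : ‖∫ s in (-m)..(-n), oscF s‖ ≤ 3 / min m n := by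
      rcases le_total m n with h | h
      · rw [integral_symm, norm_neg]
        refine le_trans (osc_bound_neg (a := -n) (b := -m) (by linarith) (by linarith)) ?_
        rw [neg_neg]
        exact div_le_div_of_nonneg_left (by norm_num) hminpos (min_le_left _ _)
      · refine le_trans (osc_bound_neg (a := -m) (b := -n) (by linarith) (by linarith)) ?_
        rw [neg_neg]
        exact div_le_div_of_nonneg_left (by norm_num) hminpos (min_le_right _ _)
    refine lt_of_le_of_lt step ?_
    rw [div_lt_iff₀ hminpos]
    have h4 : 3 / ε < min m n := by linarith
    rw [div_lt_iff₀ hε] at h4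
    nlinarith
  obtain ⟨L, hL⟩ := cauchySeq_tendsto_of_complete hcauchy
  refine ⟨L, hL, ?_⟩
  refine le_of_tendsto hL.norm ?_
  filter_upwards [eventually_ge_atTop (-t)] with R hR
  refine le_trans (osc_bound_neg ht (by linarith)) ?_
  rw [div_le_iff₀ (by linarith)]
  nlinarith

lemma set_id_pos (c R : ℝ) :
    {s : ℝ | 1 < |s| ∧ |s| < R ∧ c < s}
      = Set.Ioo (max c (-R)) (-1) ∪ Set.Ioo (max c 1) R := by
  ext s
  simp only [Set.mem_setOf_eq, Set.mem_union, Set.mem_Ioo, lt_abs, abs_lt, max_lt_iff]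
  constructor
  · rintro ⟨h1 | h1, ⟨h2, h3⟩, h4⟩
    · right; exact ⟨⟨h4, h1⟩, h3⟩
    · left; exact ⟨⟨h4, h2⟩, by linarith⟩
  · rintro (⟨⟨h4, h2⟩, h1⟩ | ⟨⟨h4, h1⟩, h3⟩)
    · exact ⟨Or.inr (by linarith), ⟨h2, by linarith⟩, h4⟩
    · exact ⟨Or.inl h1, ⟨by linarith, h3⟩, h4⟩

lemma set_id_neg (c R : ℝ) :
    {s : ℝ | 1 < |s| ∧ |s| < R ∧ s < c}
      = Set.Ioo (-R) (min c (-1)) ∪ Set.Ioo 1 (min c R) := by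
  ext s
  simp only [Set.mem_setOf_eq, Set.mem_union, Set.mem_Ioo, lt_abs, abs_lt, lt_min_iff]
  constructor
  · rintro ⟨h1 | h1, ⟨h2, h3⟩, h4⟩
    · right; exact ⟨h1, h4, h3⟩
    · left; exact ⟨h2, h4, by linarith⟩
  · rintro (⟨h2, h4, h1⟩ | ⟨h1, h4, h3⟩)
    · exact ⟨Or.inr (by linarith), ⟨h2, by linarith⟩, h4⟩
    · exact ⟨Or.inl h1, ⟨by linarith, h3⟩, h4⟩

theorem bounded_model_oscillatory_integral :
    ∃ C : ℝ, ∀ a b : ℝ, b ≠ 0 →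
      ∃ L : ℂ,
        Tendsto (fun R : ℝ => ∫ s in {s : ℝ | 1 < |s| ∧ |s| < R ∧ s / b > a},
            Complex.exp (I * (s : ℂ)) / (s : ℂ))
          atTop (nhds L) ∧ ‖L‖ ≤ C := by
  refine ⟨6, fun a b hb => ?_⟩
  have hfe : ∀ S : Set ℝ,
      (∫ s in S, Complex.exp (I * (s : ℂ)) / (s : ℂ)) = ∫ s in S, oscF s := fun _ => rfl
  rcases hb.lt_or_gt with hbneg | hbpos
  · -- b < 0
    set c := a * b with hc_def
    have hset : ∀ R : ℝ, {s : ℝ | 1 < |s| ∧ |s| < R ∧ s / b > a}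
        = Set.Ioo (-R) (min c (-1)) ∪ Set.Ioo 1 (min c R) := by
      intro R
      rw [← set_id_neg]
      ext s
      simp only [Set.mem_setOf_eq, gt_iff_lt, lt_div_iff_of_neg hbneg, hc_def]
    obtain ⟨L1, hL1, hL1b⟩ := osc_conv_neg (t := min c (-1)) (min_le_right _ _)
    set B := ∫ s in Set.Ioo 1 c, oscF s with hB_def
    have hB : ‖B‖ ≤ 3 := by
      rcases lt_or_ge 1 c with hc | hc
      · have hBe : B = ∫ s in (1:ℝ)..c, oscF s := by
          rw [integral_of_le hc.le, integral_Ioc_eq_integral_Ioo]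
        rw [hBe]
        refine le_trans (osc_bound_pos le_rfl hc.le) ?_
        norm_num
      · rw [hB_def, Set.Ioo_eq_empty (not_lt.mpr hc)]
        simp
    refine ⟨L1 + B, ?_, ?_⟩
    · apply Tendsto.congr' _ (hL1.add tendsto_const_nhds)
      filter_upwards [eventually_ge_atTop (max (|c| + 1) 2)] with R hR
      have hR1 : |c| + 1 ≤ R := le_trans (le_max_left _ _) hR
      have hR2 : 2 ≤ R := le_trans (le_max_right _ _) hR
      have habs1 : -|c| ≤ c := neg_abs_le c
      have habs2 : c ≤ |c| := le_abs_self c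
      rw [hfe, hset R]
      have hmin : min c R = c := min_eq_left (by linarith)
      rw [hmin]
      have hd : Disjoint (Set.Ioo (-R) (min c (-1))) (Set.Ioo (1:ℝ) c) := by
        rw [Set.disjoint_left]
        intro x hx1 hx2
        have h1 : x < -1 := lt_of_lt_of_le hx1.2 (min_le_right _ _)
        have h2 : 1 < x := hx2.1
        linarith
      rw [setIntegral_union hd measurableSet_Ioo
        (oscF_integrableOn (Or.inl (min_le_right _ _)))
        (oscF_integrableOn (Or.inr le_rfl))]
      congr 1
      rw [integral_of_le (by
        refine le_trans (by linarith : -R ≤ -(|c| + 1)) (le_min (by linarith) (by linarith))),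
        integral_Ioc_eq_integral_Ioo]
    · refine le_trans (norm_add_le _ _) ?_
      linarith
  · -- b > 0
    set c := a * b with hc_def
    have hset : ∀ R : ℝ, {s : ℝ | 1 < |s| ∧ |s| < R ∧ s / b > a}
        = Set.Ioo (max c (-R)) (-1) ∪ Set.Ioo (max c 1) R := by
      intro R
      rw [← set_id_pos]
      ext s
      simp only [Set.mem_setOf_eq, gt_iff_lt, lt_div_iff₀ hbpos, hc_def]
    obtain ⟨L2, hL2, hL2b⟩ := osc_conv_pos (t := max c 1) (le_max_right _ _)
    set A := ∫ s in Set.Ioo c (-1), oscF s with hA_def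
    have hA : ‖A‖ ≤ 3 := by
      rcases le_or_gt c (-1) with hc | hc
      · have hAe : A = ∫ s in c..(-1:ℝ), oscF s := by
          rw [integral_of_le hc, integral_Ioc_eq_integral_Ioo]
        rw [hAe]
        refine le_trans (osc_bound_neg le_rfl hc) ?_
        norm_num
      · rw [hA_def, Set.Ioo_eq_empty (not_lt.mpr hc.le)]
        simp
    refine ⟨A + L2, ?_, ?_⟩
    · apply Tendsto.congr' _ (tendsto_const_nhds.add hL2)
      filter_upwards [eventually_ge_atTop (max (|c| + 1) 2)] with R hR
      have hR1 : |c| + 1 ≤ R := le_trans (le_max_left _ _) hR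
      have hR2 : 2 ≤ R := le_trans (le_max_right _ _) hR
      have habs1 : -|c| ≤ c := neg_abs_le c
      have habs2 : c ≤ |c| := le_abs_self c
      rw [hfe, hset R]
      have hmax : max c (-R) = c := max_eq_left (by linarith)
      rw [hmax]
      have hd : Disjoint (Set.Ioo c (-1:ℝ)) (Set.Ioo (max c 1) R) := by
        rw [Set.disjoint_left]
        intro x hx1 hx2
        have h1 : x < -1 := hx1.2
        have h2 : 1 < x := lt_of_le_of_lt (le_max_right c 1) hx2.1
        linarith
      rw [setIntegral_union hd measurableSet_Ioo
        (oscF_integrableOn (Or.inl le_rfl))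
        (oscF_integrableOn (Or.inr (le_max_right c 1)))]
      congr 1
      rw [integral_of_le (max_le (by linarith) (by linarith)),
        integral_Ioc_eq_integral_Ioo]
    · refine le_trans (norm_add_le _ _) ?_
      linarith
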